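/- Let R be a natural number, W = 2R + 1, and f : ℕ → ℝ. Suppose l : ℕ → ℝ satisfies l(i) = f(i) whenever W divides i and l(i + 1) = max(l(i), f(i + 1)) whenever W does not divide i + 1, and r : ℕ → ℝ satisfies r(i) = f(i) whenever i ≡ W − 1 (mod W) and r(i) = max(r(i + 1), f(i)) whenever i is not congruent to W − 1 modulo W. Then for every i ≥ R, the maximum of f(j) over the window i − R ≤ j ≤ i + R equals max(r(i − R), l(i + R)). -/

import Mathlib

open Finset

private lemma lsup (W : ℕ) (f l : ℕ → ℝ)
    (hl0 : ∀ i, W ∣ i → l i = f i)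
    (hl1 : ∀ i, ¬ W ∣ (i + 1) → l (i + 1) = max (l i) (f (i + 1))) :
    ∀ i (h : W * (i / W) ≤ i), l i =
      (Finset.Icc (W * (i / W)) i).sup' (Finset.nonempty_Icc.mpr h) f := by
  intro i
  induction i with
  | zero =>
    intro h
    simp [hl0 0 (dvd_zero W)]
  | succ n ih =>
    intro h
    by_cases hd : W ∣ (n + 1)
    · have hq : W * ((n + 1) / W) = n + 1 := Nat.mul_div_cancel' hd
      rw [hl0 _ hd]
      simp [hq]
    · have hq : (n + 1) / W = n / W := by
        rw [Nat.succ_div, if_neg hd]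
        omega
      have hle : W * (n / W) ≤ n := Nat.mul_div_le n W
      have hset : Finset.Icc (W * ((n+1) / W)) (n+1)
          = insert (n+1) (Finset.Icc (W * (n / W)) n) := by
        rw [hq, Finset.insert_Icc_right_eq_Icc_add_one (by omega)]
      rw [hl1 n hd, ih hle,
        Finset.sup'_congr (Finset.nonempty_Icc.mpr h) hset (fun x _ => rfl),
        Finset.sup'_insert (Finset.nonempty_Icc.mpr hle)]
      exact max_comm _ _

private lemma rsup (W : ℕ) (hW : 0 < W) (f r : ℕ → ℝ)
    (hr0 : ∀ i, i % W = W - 1 → r i = f i)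
    (hr1 : ∀ i, i % W ≠ W - 1 → r i = max (r (i + 1)) (f i)) :
    ∀ n i (hn : W - 1 - i % W = n) (h : i ≤ W * (i / W) + (W - 1)), r i =
      (Finset.Icc i (W * (i / W) + (W - 1))).sup' (Finset.nonempty_Icc.mpr h) f := by
  intro n
  induction n with
  | zero =>
    intro i hn h
    have hm : i % W = W - 1 := by
      have := Nat.mod_lt i hW; omega
    have hi : W * (i / W) + (W - 1) = i := by
      have := Nat.div_add_mod i W; omega
    rw [hr0 i hm]
    simp [hi]
  | succ n ih =>
    intro i hn h
    have hmlt : i % W < W - 1 := by omega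
    have hm : i % W ≠ W - 1 := by omega
    have hmod : (i + 1) % W = i % W + 1 := by
      rw [Nat.add_mod]
      have h1 : 1 % W = 1 := Nat.mod_eq_of_lt (by omega)
      rw [h1, Nat.mod_eq_of_lt]
      have := Nat.mod_lt i hW
      omega
    have hdvd : ¬ W ∣ (i + 1) := by
      rw [Nat.dvd_iff_mod_eq_zero]
      omega
    have hq : (i + 1) / W = i / W := by rw [Nat.succ_div, if_neg hdvd]; omega
    have hn' : W - 1 - (i + 1) % W = n := by omega
    have hle : i + 1 ≤ W * ((i+1) / W) + (W - 1) := by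
      have := Nat.div_add_mod (i+1) W
      omega
    have hset : Finset.Icc i (W * (i / W) + (W - 1))
        = insert i (Finset.Icc (i+1) (W * ((i+1) / W) + (W - 1))) := by
      rw [hq]
      ext x
      simp only [Finset.mem_Icc, Finset.mem_insert]
      omega
    rw [hr1 i hm, ih (i+1) hn' hle,
      Finset.sup'_congr (Finset.nonempty_Icc.mpr h) hset (fun x _ => rfl),
      Finset.sup'_insert (Finset.nonempty_Icc.mpr hle)]
    exact max_comm _ _

/-- Correctness of the MAX-FILTER algorithm: given the blockwise left running maximum `l`
and right running maximum `r` (window size `W = 2R+1`), for every position `i ≥ R` the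
windowed maximum `max { f j : i − R ≤ j ≤ i + R }` equals `max (r (i − R)) (l (i + R))`. -/
theorem stmt_17 (R : ℕ) (W : ℕ) (hW : W = 2 * R + 1) (f : ℕ → ℝ)
    (l : ℕ → ℝ)
    (hl0 : ∀ i, W ∣ i → l i = f i)
    (hl1 : ∀ i, ¬ W ∣ (i + 1) → l (i + 1) = max (l i) (f (i + 1)))
    (r : ℕ → ℝ)
    (hr0 : ∀ i, i % W = W - 1 → r i = f i)
    (hr1 : ∀ i, i % W ≠ W - 1 → r i = max (r (i + 1)) (f i)) :
    ∀ i : ℕ, R ≤ i →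
      (Finset.Icc (i - R) (i + R)).sup'
        (Finset.nonempty_Icc.mpr (by omega)) f = max (r (i - R)) (l (i + R)) := by
  intro i hi
  have hWpos : 0 < W := by omega
  set a := i - R with ha
  set b := i + R with hb
  have hba : b = a + (W - 1) := by omega
  have hda : a = W * (a / W) + a % W := (Nat.div_add_mod a W).symm
  have hma : a % W < W := Nat.mod_lt a hWpos
  have hrsup := rsup W hWpos f r hr0 hr1 (W - 1 - a % W) a rfl (by omega)
  have key : ∀ (s t : Finset ℕ) (hs : s.Nonempty) (ht : t.Nonempty), s = t →
      s.sup' hs f = t.sup' ht f := by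
    rintro s t hs ht rfl; rfl
  by_cases h0 : a % W = 0
  · -- single block: a is block start, b is block end
    have hqb : b / W = a / W := by
      have hbe : b = (W - 1) + W * (a / W) := by omega
      rw [hbe, Nat.add_mul_div_left _ _ hWpos, Nat.div_eq_of_lt (by omega), Nat.zero_add]
    have hlsup := lsup W f l hl0 hl1 b (by rw [hqb]; omega)
    have hab : W * (a / W) = a := by omega
    have hab' : W * (a / W) + (W - 1) = b := by omega
    have hS1 : Finset.Icc a (W * (a / W) + (W - 1)) = Finset.Icc (i - R) (i + R) := by
      rw [hab']
    have hS2 : Finset.Icc (W * (b / W)) b = Finset.Icc (i - R) (i + R) := by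
      rw [hqb, hab]
    rw [hrsup, hlsup,
      key _ _ _ (Finset.nonempty_Icc.mpr (by omega : i - R ≤ i + R)) hS1,
      key _ _ _ (Finset.nonempty_Icc.mpr (by omega : i - R ≤ i + R)) hS2,
      max_self]
  · -- two blocks: split at e = block end of a
    set e := W * (a / W) + (W - 1) with he
    have hae : a ≤ e := by omega
    have heb : e < b := by omega
    have hqb : b / W = a / W + 1 := by
      have hbe : b = (a % W - 1) + W * (a / W + 1) := by
        have : W * (a / W + 1) = W * (a / W) + W := by ring
        omega
      rw [hbe, Nat.add_mul_div_left _ _ hWpos, Nat.div_eq_of_lt (by omega), Nat.zero_add]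
    have hstart : W * (b / W) = e + 1 := by
      rw [hqb]
      have : W * (a / W + 1) = W * (a / W) + W := by ring
      omega
    have hlsup := lsup W f l hl0 hl1 b (by rw [hstart]; omega)
    have hsplit : Finset.Icc (i - R) (i + R) = Finset.Icc a e ∪ Finset.Icc (e + 1) b := by
      ext x
      simp only [Finset.mem_Icc, Finset.mem_union]
      omega
    have hS2 : Finset.Icc (W * (b / W)) b = Finset.Icc (e + 1) b := by
      rw [hstart]
    have hne : (Finset.Icc a e ∪ Finset.Icc (e + 1) b).Nonempty :=
      ((Finset.nonempty_Icc.mpr hae).mono Finset.subset_union_left)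
    rw [hrsup, hlsup,
      key _ _ _ (Finset.nonempty_Icc.mpr (by omega : e + 1 ≤ b)) hS2,
      key _ _ _ hne hsplit,
      Finset.sup'_union (Finset.nonempty_Icc.mpr hae)
        (Finset.nonempty_Icc.mpr (by omega : e + 1 ≤ b)) f]
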